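/- Fix an integer k ≥ 2 and let G=(V,E) be a simple graph such that EMH_{n,n}(G) = 0 (equivalently, ker(∂_{n,n} : EMC_{n,n}(G) → EMC_{n−1,n}(G)) = 0) for every 2 ≤ n ≤ k. Then the kernel of ∂_{k,k} : MC_{k,k}(G) → MC_{k−1,k}(G) equals the ℤ-span of the set of k-trails of the form (x_0,x_1,x_0,x_1,…) that alternate between two distinct adjacent vertices x_0 and x_1. In particular, every generator of MH_{k,k}(G) = ker(∂_{k,k}) is such an alternating k-trail. -/

import Mathlib

open scoped Classical

variable {V : Type*}

/-- Length of the walk described by a list of landmarks: sum of path-metric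
distances between consecutive entries (`⊤`-valued if some pair is unreachable). -/
noncomputable def mlen (G : SimpleGraph V) : List V → ℕ∞
  | [] => 0
  | [_] => 0
  | a :: b :: t => G.edist a b + mlen G (b :: t)

/-- A list of landmarks is a trail if consecutive entries are distinct and reachable. -/
def IsTrailList (G : SimpleGraph V) (l : List V) : Prop :=
  l.Chain' fun a b => a ≠ b ∧ G.Reachable a b

/-- `trails G k ℓ` is the set `T_{k,ℓ}(G)` of `k`-trails of length `ℓ`,
encoded as lists with `k+1` entries. -/
def trails (G : SimpleGraph V) (k ℓ : ℕ) : Set (List V) :=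
  {l | l.length = k + 1 ∧ IsTrailList G l ∧ mlen G l = (ℓ : ℕ∞)}

/-- `etrails G k ℓ` is the set `ET_{k,ℓ}(G)` of eulerian `k`-trails of length `ℓ`. -/
def etrails (G : SimpleGraph V) (k ℓ : ℕ) : Set (List V) :=
  {l | l ∈ trails G k ℓ ∧ l.Nodup}

/-- Boundary of a single generator: `∂_{·,ℓ}(x₀,…,x_k) = Σ_{i=1}^{k-1} (-1)^i ∂^i`,
where `∂^i` deletes the `i`-th landmark if this does not change the length. -/
noncomputable def bdryElt (G : SimpleGraph V) (ℓ : ℕ) (l : List V) : List V →₀ ℤ :=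
  ∑ i ∈ Finset.Ioo 0 (l.length - 1),
    if mlen G (l.eraseIdx i) = (ℓ : ℕ∞) then ((-1 : ℤ) ^ i) • Finsupp.single (l.eraseIdx i) 1
    else 0

/-- The magnitude differential (length parameter `ℓ`) on the ambient free abelian group
on all landmark lists.  Its restriction to `MC_{k,ℓ}(G)` (chains supported on
`trails G k ℓ`) is `∂_{k,ℓ}`. -/
noncomputable def bdry (G : SimpleGraph V) (ℓ : ℕ) : (List V →₀ ℤ) →ₗ[ℤ] (List V →₀ ℤ) :=
  Finsupp.lsum ℤ fun l => LinearMap.toSpanSingleton ℤ _ (bdryElt G ℓ l)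

/-- `MC_{k,ℓ}(G)`: the free abelian group on `T_{k,ℓ}(G)`, realized as the submodule of
finitely supported `ℤ`-valued functions supported on trails. -/
noncomputable def MC (G : SimpleGraph V) (k ℓ : ℕ) : Submodule ℤ (List V →₀ ℤ) :=
  Finsupp.supported ℤ ℤ (trails G k ℓ)

/-- `EMC_{k,ℓ}(G)`: the free abelian group on `ET_{k,ℓ}(G)`. -/
noncomputable def EMC (G : SimpleGraph V) (k ℓ : ℕ) : Submodule ℤ (List V →₀ ℤ) :=
  Finsupp.supported ℤ ℤ (etrails G k ℓ)

/-- `EMH_{k,k}(G) = ker(∂_{k,k}|_{EMC_{k,k}(G)})`, the first-diagonal eulerian magnitude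
homology group (`EMC_{k+1,k}(G) = 0`, so homology is just the kernel). -/
noncomputable def EMHkk (G : SimpleGraph V) (k : ℕ) : Submodule ℤ (List V →₀ ℤ) :=
  EMC G k k ⊓ LinearMap.ker (bdry G k)

/-- `MH_{k,k}(G) = ker(∂_{k,k}|_{MC_{k,k}(G)})`. -/
noncomputable def MHkk (G : SimpleGraph V) (k : ℕ) : Submodule ℤ (List V →₀ ℤ) :=
  MC G k k ⊓ LinearMap.ker (bdry G k)

/-- `β_{k,k}(G)`, the rank of `EMH_{k,k}(G)`. -/
noncomputable def emBetti (G : SimpleGraph V) (k : ℕ) : ℕ :=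
  Module.finrank ℤ (EMHkk G k)

/-- `c(G,H)`: the number of vertex subsets of `G` whose induced subgraph is isomorphic
to `H`. -/
noncomputable def subgraphCount (G : SimpleGraph V) {W : Type*} (H : SimpleGraph W) : ℕ :=
  Set.ncard {s : Set V | Nonempty ((G.induce s) ≃g H)}

section Aux1

variable (G : SimpleGraph V)

@[simp] lemma mlen_nil : mlen G ([] : List V) = 0 := rfl
@[simp] lemma mlen_singleton (a : V) : mlen G [a] = 0 := rfl
@[simp] lemma mlen_cons_cons (a b : V) (t : List V) :
    mlen G (a :: b :: t) = G.edist a b + mlen G (b :: t) := rfl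

lemma mlen_append : ∀ (p : List V) (a : V) (s : List V),
    mlen G (p ++ a :: s) = mlen G (p ++ [a]) + mlen G (a :: s)
  | [], a, s => by simp
  | [q], a, s => by simp
  | q :: r :: p, a, s => by
    have ih := mlen_append (r :: p) a s
    simp only [List.cons_append, mlen_cons_cons] at ih ⊢
    rw [ih, add_assoc]

lemma mlen_of_chain_adj : ∀ {l : List V}, List.Chain' G.Adj l →
    mlen G l = ((l.length - 1 : ℕ) : ℕ∞)
  | [], _ => by simp
  | [_], _ => by simp
  | a :: b :: t, h => by
    rw [List.Chain', List.isChain_cons_cons] at h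
    rw [mlen_cons_cons, mlen_of_chain_adj h.2, SimpleGraph.edist_eq_one_iff_adj.mpr h.1]
    have h1 : (b :: t).length - 1 = t.length := by simp
    have h2 : (a :: b :: t).length - 1 = t.length + 1 := by simp
    rw [h1, h2, Nat.cast_add, Nat.cast_one, add_comm]

lemma le_mlen_of_trail : ∀ {l : List V}, IsTrailList G l →
    ((l.length - 1 : ℕ) : ℕ∞) ≤ mlen G l
  | [], _ => by simp
  | [_], _ => by simp
  | a :: b :: t, h => by
    rw [IsTrailList, List.Chain', List.isChain_cons_cons] at h
    have ih := le_mlen_of_trail h.2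
    have h1 : (1 : ℕ∞) ≤ G.edist a b :=
      ENat.one_le_iff_ne_zero.2 (fun h0 => h.1.1 (SimpleGraph.edist_eq_zero_iff.1 h0))
    have hlen : ((b :: t).length - 1 : ℕ) = t.length := by simp
    rw [hlen] at ih
    have hlen2 : ((a :: b :: t).length - 1 : ℕ) = t.length + 1 := by simp
    rw [hlen2, mlen_cons_cons]
    have : ((t.length + 1 : ℕ) : ℕ∞) = 1 + (t.length : ℕ∞) := by push_cast; ring
    rw [this]
    exact add_le_add h1 ih

lemma chain'_adj_of_trail : ∀ {l : List V}, IsTrailList G l →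
    mlen G l = ((l.length - 1 : ℕ) : ℕ∞) → List.Chain' G.Adj l
  | [], _, _ => List.isChain_nil
  | [_], _, _ => List.isChain_singleton _
  | a :: b :: t, h, hm => by
    rw [IsTrailList, List.Chain', List.isChain_cons_cons] at h
    have h1 : (1 : ℕ∞) ≤ G.edist a b :=
      ENat.one_le_iff_ne_zero.2 (fun h0 => h.1.1 (SimpleGraph.edist_eq_zero_iff.1 h0))
    have h2 := le_mlen_of_trail G h.2
    have hlen : ((b :: t).length - 1 : ℕ) = t.length := by simp
    rw [hlen] at h2
    have hlen2 : ((a :: b :: t).length - 1 : ℕ) = t.length + 1 := by simp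
    rw [hlen2, mlen_cons_cons] at hm
    have hcast : ((t.length + 1 : ℕ) : ℕ∞) = 1 + (t.length : ℕ∞) := by push_cast; ring
    rw [hcast] at hm
    have hd1 : G.edist a b = 1 := by
      refine le_antisymm ?_ h1
      have hle : G.edist a b + (t.length : ℕ∞) ≤ 1 + (t.length : ℕ∞) := by
        calc G.edist a b + (t.length : ℕ∞) ≤ G.edist a b + mlen G (b :: t) :=
              add_le_add_right h2 _
          _ = 1 + (t.length : ℕ∞) := hm
      exact (WithTop.add_le_add_iff_right (ENat.coe_ne_top _)).1 hle
    rw [hd1] at hm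
    have hmt : mlen G (b :: t) = (t.length : ℕ∞) := WithTop.add_left_cancel ENat.one_ne_top hm
    refine List.isChain_cons_cons.2 ⟨SimpleGraph.edist_eq_one_iff_adj.1 hd1, chain'_adj_of_trail h.2 ?_⟩
    rw [hmt, hlen]

lemma mem_trails_iff (k : ℕ) (l : List V) :
    l ∈ trails G k k ↔ l.length = k + 1 ∧ List.Chain' G.Adj l := by
  constructor
  · rintro ⟨h1, h2, h3⟩
    refine ⟨h1, chain'_adj_of_trail G h2 ?_⟩
    rw [h3, h1]
    simp
  · rintro ⟨h1, hc⟩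
    refine ⟨h1, hc.imp fun a b hab => ⟨hab.ne, hab.reachable⟩, ?_⟩
    rw [mlen_of_chain_adj G hc, h1]
    simp

end Aux1

section Aux2

variable (G : SimpleGraph V)

lemma getElem_congr_list {l l' : List V} (h : l = l') (i : ℕ) (hi : i < l.length) :
    l[i]'hi = l'[i]'(h ▸ hi) := by cases h; rfl

lemma take_append_getElem (l : List V) (m : ℕ) (h : m < l.length) :
    l.take m ++ [l[m]'h] = l.take (m + 1) := by
  rw [List.take_succ, List.getElem?_eq_getElem h]
  rfl

lemma chain'_adj_getElem {l : List V} (h : List.Chain' G.Adj l) {i : ℕ}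
    (hi : i + 1 < l.length) : G.Adj (l[i]'(by omega)) (l[i+1]'hi) := by
  rw [List.Chain', List.isChain_iff_getElem] at h
  simpa using h i (by omega)

lemma mlen_eraseIdx {k : ℕ} {l : List V} (hl : l.length = k + 1)
    (hc : List.Chain' G.Adj l) {m : ℕ} (hm : m + 2 ≤ k) :
    mlen G (l.eraseIdx (m + 1)) =
      ((k - 2 : ℕ) : ℕ∞) + G.edist (l[m]'(by omega)) (l[m+2]'(by omega)) := by
  have h2 : m + 2 < l.length := by omega
  have herase : l.eraseIdx (m + 1)
      = l.take m ++ l[m]'(by omega) :: l[m+2]'h2 :: l.drop (m + 3) := by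
    rw [List.eraseIdx_eq_take_drop_succ, ← take_append_getElem l m (by omega),
      List.drop_eq_getElem_cons (show m + 1 + 1 < l.length by omega)]
    simp only [List.append_assoc, List.singleton_append]
  have hp : mlen G (l.take m ++ [l[m]'(by omega)]) = (m : ℕ∞) := by
    rw [take_append_getElem l m (by omega), mlen_of_chain_adj G (hc.take _)]
    congr 1
    rw [List.length_take]
    omega
  have hs : mlen G (l[m+2]'h2 :: l.drop (m + 3)) = ((k - m - 2 : ℕ) : ℕ∞) := by
    rw [show l[m+2]'h2 :: l.drop (m + 3) = l.drop (m + 2)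
        from (List.drop_eq_getElem_cons h2).symm, mlen_of_chain_adj G (hc.drop _)]
    congr 1
    rw [List.length_drop]
    omega
  rw [herase, mlen_append, mlen_cons_cons, hp, hs]
  have hsum : (m : ℕ∞) + ((k - m - 2 : ℕ) : ℕ∞) = ((k - 2 : ℕ) : ℕ∞) := by
    rw [← Nat.cast_add]
    congr 1
    omega
  rw [← hsum]
  ring

lemma mlen_eraseIdx_eq_iff {k : ℕ} {l : List V} (hl : l.length = k + 1)
    (hc : List.Chain' G.Adj l) {m : ℕ} (hm : m + 2 ≤ k) :
    mlen G (l.eraseIdx (m + 1)) = (k : ℕ∞) ↔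
      G.edist (l[m]'(by omega)) (l[m+2]'(by omega)) = 2 := by
  rw [mlen_eraseIdx G hl hc hm]
  have hne : ((k - 2 : ℕ) : ℕ∞) ≠ ⊤ := ENat.coe_ne_top _
  have hk2 : ((k - 2 : ℕ) : ℕ∞) + 2 = (k : ℕ∞) := by
    rw [show (2 : ℕ∞) = ((2 : ℕ) : ℕ∞) from rfl, ← Nat.cast_add]
    congr 1
    omega
  constructor
  · intro h
    exact WithTop.add_left_cancel hne (h.trans hk2.symm)
  · intro h
    rw [h, hk2]

lemma edist_eq_two (htri : ∀ a b c : V, G.Adj a b → G.Adj b c → ¬ G.Adj a c)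
    {a b c : V} (hab : G.Adj a b) (hbc : G.Adj b c) (hac : a ≠ c) :
    G.edist a c = 2 := by
  have hle : G.edist a c ≤ 2 := by
    calc G.edist a c ≤ G.edist a b + G.edist b c := G.edist_triangle
      _ = 2 := by
        rw [SimpleGraph.edist_eq_one_iff_adj.mpr hab,
          SimpleGraph.edist_eq_one_iff_adj.mpr hbc]
        rfl
  have h0 : G.edist a c ≠ 0 := fun h => hac (SimpleGraph.edist_eq_zero_iff.1 h)
  have h1 : G.edist a c ≠ 1 := fun h => htri a b c hab hbc (SimpleGraph.edist_eq_one_iff_adj.1 h)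
  have hlt : (1 : ℕ∞) < G.edist a c :=
    lt_of_le_of_ne (ENat.one_le_iff_ne_zero.2 h0) (Ne.symm h1)
  refine le_antisymm hle ?_
  have := Order.add_one_le_of_lt hlt
  simpa [one_add_one_eq_two] using this

def IsAltList (l : List V) : Prop :=
  ∀ i, (h : i + 2 < l.length) → l[i + 2]'h = l[i]'(by omega)

lemma bdryElt_eq_zero_of_alt {k : ℕ} (hk : 2 ≤ k) {l : List V} (hl : l.length = k + 1)
    (hc : List.Chain' G.Adj l) (ha : IsAltList l) : bdryElt G k l = 0 := by
  unfold bdryElt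
  apply Finset.sum_eq_zero
  intro i hi
  rw [Finset.mem_Ioo, hl] at hi
  obtain ⟨m, rfl⟩ : ∃ m, i = m + 1 := ⟨i - 1, by omega⟩
  have hm : m + 2 ≤ k := by omega
  have hml : mlen G (l.eraseIdx (m + 1)) = ((k - 2 : ℕ) : ℕ∞) := by
    rw [mlen_eraseIdx G hl hc hm, ha m (by omega)]
    simp
  have hnel : mlen G (l.eraseIdx (m + 1)) ≠ (k : ℕ∞) := by
    rw [hml]
    intro hcon
    rw [Nat.cast_inj] at hcon
    omega
  rw [if_neg hnel]

lemma bdry_single (ℓ : ℕ) (l : List V) :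
    bdry G ℓ (Finsupp.single l 1) = bdryElt G ℓ l := by
  rw [bdry, Finsupp.lsum_single]
  rw [LinearMap.toSpanSingleton_apply, one_smul]

lemma bdryElt_apply (ℓ : ℕ) (l u : List V) :
    bdryElt G ℓ l u = ∑ i ∈ Finset.Ioo 0 (l.length - 1),
      if mlen G (l.eraseIdx i) = (ℓ : ℕ∞) ∧ l.eraseIdx i = u then (-1 : ℤ) ^ i else 0 := by
  rw [bdryElt, Finsupp.finset_sum_apply]
  apply Finset.sum_congr rfl
  intro i _
  by_cases h : mlen G (l.eraseIdx i) = (ℓ : ℕ∞)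
  · rw [if_pos h]
    by_cases h2 : l.eraseIdx i = u
    · rw [if_pos ⟨h, h2⟩, Finsupp.smul_apply, Finsupp.single_apply, if_pos h2]
      simp
    · rw [if_neg (fun hh => h2 hh.2), Finsupp.smul_apply, Finsupp.single_apply, if_neg h2]
      simp
  · rw [if_neg h, if_neg (fun hh => h hh.1)]
    simp

lemma bdry_apply (ℓ : ℕ) (c : List V →₀ ℤ) (u : List V) :
    bdry G ℓ c u = ∑ l ∈ c.support, c l * (bdryElt G ℓ l) u := by
  rw [bdry, Finsupp.lsum_apply, Finsupp.sum, Finsupp.finset_sum_apply]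
  apply Finset.sum_congr rfl
  intro l _
  rw [LinearMap.toSpanSingleton_apply, Finsupp.smul_apply, smul_eq_mul]

end Aux2

section Aux3

variable (G : SimpleGraph V)

lemma altL_getElem (u v : V) (k : ℕ) {i : ℕ} (h : i < k + 1) :
    (List.ofFn fun i : Fin (k + 1) => if i.val % 2 = 0 then u else v)[i]'(by simpa using h)
      = if i % 2 = 0 then u else v := by
  simp only [List.getElem_ofFn]

lemma altL_mem_trails {u v : V} (h : G.Adj u v) (k : ℕ) :
    (List.ofFn fun i : Fin (k + 1) => if i.val % 2 = 0 then u else v) ∈ trails G k k := by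
  rw [mem_trails_iff]
  refine ⟨by simp, ?_⟩
  rw [List.Chain', List.isChain_iff_getElem]
  intro i hi
  simp only [List.length_ofFn] at hi
  rw [altL_getElem u v k (by omega), altL_getElem u v k (by omega)]
  rcases Nat.mod_two_eq_zero_or_one i with h2 | h2
  · rw [if_pos h2, if_neg (by omega)]
    exact h
  · rw [if_neg (by omega), if_pos (by omega)]
    exact h.symm

lemma altL_isAlt (u v : V) (k : ℕ) :
    IsAltList (List.ofFn fun i : Fin (k + 1) => if i.val % 2 = 0 then u else v) := by
  intro i h
  simp only [List.length_ofFn] at h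
  rw [altL_getElem u v k (by omega), altL_getElem u v k (by omega)]
  have h2 : (i + 2) % 2 = i % 2 := by omega
  rw [h2]

lemma eq_altL_of_alt {k : ℕ} (hk : 2 ≤ k) {l : List V} (hl : l ∈ trails G k k)
    (ha : IsAltList l) :
    ∃ u v, G.Adj u v ∧
      l = List.ofFn fun i : Fin (k + 1) => if i.val % 2 = 0 then u else v := by
  obtain ⟨hlen, hc⟩ := (mem_trails_iff G k l).1 hl
  have h0 : 0 < l.length := by omega
  have h1 : 1 < l.length := by omega
  refine ⟨l[0]'h0, l[1]'h1, chain'_adj_getElem G hc h1, ?_⟩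
  have key : ∀ i, ∀ h : i < l.length, l[i]'h = if i % 2 = 0 then l[0]'h0 else l[1]'h1 := by
    intro i
    induction i using Nat.strong_induction_on with
    | _ i ih =>
      intro h
      match i with
      | 0 => simp
      | 1 => simp
      | (m+2) =>
        rw [ha m h, ih m (by omega) (by omega)]
        have h2 : (m + 2) % 2 = m % 2 := by omega
        rw [h2]
  apply List.ext_getElem (by simp [hlen])
  intro i hi hi2
  rw [key i hi, altL_getElem]
  omega

lemma indep {k : ℕ} (hk : 2 ≤ k)
    (htri : ∀ a b c : V, G.Adj a b → G.Adj b c → ¬ G.Adj a c)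
    (hsq : ∀ p q y y' : V, G.edist p q = 2 → G.Adj p y → G.Adj y q →
      G.Adj p y' → G.Adj y' q → y = y')
    (c : List V →₀ ℤ)
    (hsupp : ∀ l ∈ c.support, l ∈ trails G k k ∧ ¬ IsAltList l)
    (hker : bdry G k c = 0) : c = 0 := by
  ext w
  rw [Finsupp.coe_zero, Pi.zero_apply]
  by_cases hw : w ∈ c.support
  swap
  · exact Finsupp.notMem_support_iff.1 hw
  obtain ⟨hwt, hwa⟩ := hsupp w hw
  obtain ⟨hwlen, hwc⟩ := (mem_trails_iff G k w).1 hwt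
  have hex : ∃ j, ∃ h : j + 2 < w.length, w[j + 2]'h ≠ w[j]'(by omega) := by
    by_contra hcon
    push_neg at hcon
    exact hwa fun i h => hcon i h
  obtain ⟨j, hj2, hjne⟩ := hex
  have hjk : j + 2 ≤ k := by omega
  have hadjw : ∀ i, ∀ h : i + 1 < w.length, G.Adj (w[i]'(by omega)) (w[i+1]'h) :=
    fun i h => chain'_adj_getElem G hwc h
  have hd2 : G.edist (w[j]'(by omega)) (w[j+2]'(by omega)) = 2 :=
    edist_eq_two G htri (hadjw j (by omega)) (hadjw (j+1) (by omega)) (Ne.symm hjne)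
  set u := w.eraseIdx (j+1) with hu
  have hulen : u.length = k := by
    rw [hu, List.length_eraseIdx, if_pos (by omega)]
    omega
  have hulen' : (w.eraseIdx (j+1)).length = k := hulen
  have claimA : ∀ w' ∈ c.support, ∀ i, 0 < i → i < k →
      mlen G (w'.eraseIdx i) = (k : ℕ∞) → w'.eraseIdx i = u → i = j + 1 ∧ w' = w := by
    intro w' hw' i hipos hik hmlen herase
    obtain ⟨hw't, _⟩ := hsupp w' hw'
    obtain ⟨hw'len, hw'c⟩ := (mem_trails_iff G k w').1 hw't
    obtain ⟨m, rfl⟩ : ∃ m, i = m + 1 := ⟨i - 1, by omega⟩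
    have hm2 : m + 2 ≤ k := by omega
    have hd := (mlen_eraseIdx_eq_iff G hw'len hw'c hm2).1 hmlen
    have hl' : (w'.eraseIdx (m+1)).length = k := by rw [herase, hulen]
    have e1 : u[m]'(by omega) = w'[m]'(by omega) :=
      (getElem_congr_list herase.symm m (by omega)).trans
        (List.getElem_eraseIdx_of_lt (l := w') (i := (m+1)) (j := m) (by omega) (by omega))
    have e2 : u[m+1]'(by omega) = w'[m+2]'(by omega) :=
      (getElem_congr_list herase.symm (m+1) (by omega)).trans
        (List.getElem_eraseIdx_of_ge (l := w') (i := (m+1)) (j := (m+1)) (by omega) (by omega))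
    have hdu : G.edist (u[m]'(by omega)) (u[m+1]'(by omega)) = 2 := by
      rw [e1, e2]
      exact hd
    have hmj : m = j := by
      by_contra hne
      have hadj : G.Adj (u[m]'(by omega)) (u[m+1]'(by omega)) := by
        rcases Nat.lt_or_ge m j with hlt | hge
        · have f1 : u[m]'(by omega) = w[m]'(by omega) :=
            (getElem_congr_list hu m (by omega)).trans
              (List.getElem_eraseIdx_of_lt (l := w) (i := (j+1)) (j := m) (by omega) (by omega))
          have f2 : u[m+1]'(by omega) = w[m+1]'(by omega) :=
            (getElem_congr_list hu (m+1) (by omega)).trans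
              (List.getElem_eraseIdx_of_lt (l := w) (i := (j+1)) (j := (m+1)) (by omega) (by omega))
          rw [f1, f2]
          exact hadjw m (by omega)
        · have hgt : j < m := by omega
          have f1 : u[m]'(by omega) = w[m+1]'(by omega) :=
            (getElem_congr_list hu m (by omega)).trans
              (List.getElem_eraseIdx_of_ge (l := w) (i := (j+1)) (j := m) (by omega) (by omega))
          have f2 : u[m+1]'(by omega) = w[m+2]'(by omega) :=
            (getElem_congr_list hu (m+1) (by omega)).trans
              (List.getElem_eraseIdx_of_ge (l := w) (i := (j+1)) (j := (m+1)) (by omega) (by omega))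
          rw [f1, f2]
          exact hadjw (m+1) (by omega)
      have := SimpleGraph.edist_eq_one_iff_adj.mpr hadj
      rw [hdu] at this
      exact absurd this (by decide)
    subst hmj
    refine ⟨rfl, ?_⟩
    apply List.ext_getElem (by rw [hw'len, hwlen])
    intro n hn1 hn2
    rcases lt_trichotomy n (m+1) with hlt | heq | hgt
    · have g1 : u[n]'(by omega) = w'[n]'(by omega) :=
        (getElem_congr_list herase.symm n (by omega)).trans
          (List.getElem_eraseIdx_of_lt (l := w') (i := (m+1)) (j := n) (by omega) (by omega))
      have g2 : u[n]'(by omega) = w[n]'(by omega) :=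
        (getElem_congr_list hu n (by omega)).trans
          (List.getElem_eraseIdx_of_lt (l := w) (i := (m+1)) (j := n) (by omega) (by omega))
      exact g1.symm.trans g2
    · subst heq
      have a1 : G.Adj (w'[m]'(by omega)) (w'[m+1]'(by omega)) :=
        chain'_adj_getElem G hw'c (by omega)
      have a2 : G.Adj (w'[m+1]'(by omega)) (w'[m+2]'(by omega)) :=
        chain'_adj_getElem G hw'c (by omega)
      have uw : u[m]'(by omega) = w[m]'(by omega) :=
        (getElem_congr_list hu m (by omega)).trans
          (List.getElem_eraseIdx_of_lt (l := w) (i := (m+1)) (j := m) (by omega) (by omega))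
      have uw2 : u[m+1]'(by omega) = w[m+2]'(by omega) :=
        (getElem_congr_list hu (m+1) (by omega)).trans
          (List.getElem_eraseIdx_of_ge (l := w) (i := (m+1)) (j := (m+1)) (by omega) (by omega))
      have b1 : w'[m]'(by omega) = w[m]'(by omega) := e1.symm.trans uw
      have b2 : w'[m+2]'(by omega) = w[m+2]'(by omega) := e2.symm.trans uw2
      have c1 : G.Adj (w'[m]'(by omega)) (w[m+1]'(by omega)) := by
        rw [b1]
        exact hadjw m (by omega)
      have c2 : G.Adj (w[m+1]'(by omega)) (w'[m+2]'(by omega)) := by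
        rw [b2]
        exact hadjw (m+1) (by omega)
      exact hsq _ _ _ _ hd a1 a2 c1 c2
    · obtain ⟨t, rfl⟩ : ∃ t, n = t + 1 := ⟨n - 1, by omega⟩
      have g1 : u[t]'(by omega) = w'[t+1]'(by omega) :=
        (getElem_congr_list herase.symm t (by omega)).trans
          (List.getElem_eraseIdx_of_ge (l := w') (i := (m+1)) (j := t) (by omega) (by omega))
      have g2 : u[t]'(by omega) = w[t+1]'(by omega) :=
        (getElem_congr_list hu t (by omega)).trans
          (List.getElem_eraseIdx_of_ge (l := w) (i := (m+1)) (j := t) (by omega) (by omega))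
      exact g1.symm.trans g2
  have hIoo : j + 1 ∈ Finset.Ioo 0 (w.length - 1) := by
    rw [Finset.mem_Ioo]
    omega
  have hmlenu : mlen G (w.eraseIdx (j+1)) = (k : ℕ∞) :=
    (mlen_eraseIdx_eq_iff G hwlen hwc hjk).2 hd2
  have hbw : ∀ w' ∈ c.support,
      (bdryElt G k w') u = if w' = w then (-1 : ℤ)^(j+1) else 0 := by
    intro w' hw'
    rw [bdryElt_apply]
    by_cases hww : w' = w
    · subst hww
      rw [if_pos rfl, Finset.sum_eq_single (j+1)]
      · rw [if_pos ⟨hmlenu, hu.symm⟩]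
      · intro i hi hine
        have hcon : ¬ (mlen G (w'.eraseIdx i) = (k : ℕ∞) ∧ w'.eraseIdx i = u) := by
          rintro ⟨h1, h2⟩
          rw [Finset.mem_Ioo, hwlen] at hi
          obtain ⟨hij, -⟩ := claimA w' hw i (by omega) (by omega) h1 h2
          exact hine hij
        rw [if_neg hcon]
      · intro hnot
        exact absurd hIoo hnot
    · rw [if_neg hww]
      apply Finset.sum_eq_zero
      intro i hi
      obtain ⟨hw'len, -⟩ := (mem_trails_iff G k w').1 (hsupp w' hw').1
      have hcon : ¬ (mlen G (w'.eraseIdx i) = (k : ℕ∞) ∧ w'.eraseIdx i = u) := by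
        rintro ⟨h1, h2⟩
        rw [Finset.mem_Ioo, hw'len] at hi
        obtain ⟨-, hwe⟩ := claimA w' hw' i (by omega) (by omega) h1 h2
        exact hww hwe
      rw [if_neg hcon]
  have h0 : (bdry G k c) u = c w * (-1 : ℤ)^(j+1) := by
    rw [bdry_apply]
    have hstep : ∀ w' ∈ c.support, c w' * (bdryElt G k w') u
        = if w' = w then c w' * (-1 : ℤ)^(j+1) else 0 := by
      intro w' hw'
      rw [hbw w' hw']
      split <;> simp
    rw [Finset.sum_congr rfl hstep,
      Finset.sum_ite_eq' c.support w (fun w' => c w' * (-1 : ℤ)^(j+1)), if_pos hw]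
  rw [hker] at h0
  have hz : (0 : List V →₀ ℤ) u = 0 := rfl
  rw [hz] at h0
  exact (mul_eq_zero.1 h0.symm).resolve_right (pow_ne_zero _ (by norm_num))

end Aux3

section Aux4

variable (G : SimpleGraph V)

lemma bdryElt_three (a b c : V) :
    bdryElt G 2 [a, b, c] =
      if mlen G [a, c] = ((2 : ℕ) : ℕ∞) then -Finsupp.single [a, c] 1 else 0 := by
  rw [bdryElt]
  rw [show ([a, b, c] : List V).length - 1 = 2 from rfl,
    show Finset.Ioo (0:ℕ) 2 = {1} by decide, Finset.sum_singleton,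
    show ([a, b, c] : List V).eraseIdx 1 = [a, c] from rfl]
  by_cases h : mlen G [a, c] = ((2 : ℕ) : ℕ∞)
  · rw [if_pos h, if_pos h]
    simp
  · rw [if_neg h, if_neg h]

lemma mem_etrails_two {a b c : V} (h1 : G.Adj a b) (h2 : G.Adj b c) (hac : a ≠ c) :
    [a, b, c] ∈ etrails G 2 2 := by
  refine ⟨⟨rfl, ?_, ?_⟩, ?_⟩
  · exact List.isChain_cons_cons.2 ⟨⟨h1.ne, h1.reachable⟩, List.isChain_pair.2 ⟨h2.ne, h2.reachable⟩⟩
  · rw [mlen_cons_cons, mlen_cons_cons, mlen_singleton, add_zero,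
      SimpleGraph.edist_eq_one_iff_adj.mpr h1, SimpleGraph.edist_eq_one_iff_adj.mpr h2]
    rfl
  · simp [h1.ne, h2.ne, hac]

lemma no_triangle (hE : EMHkk G 2 = ⊥) :
    ∀ a b c : V, G.Adj a b → G.Adj b c → ¬ G.Adj a c := by
  intro a b c hab hbc hac
  have hmem : Finsupp.single [a, b, c] (1 : ℤ) ∈ EMHkk G 2 := by
    refine Submodule.mem_inf.2 ⟨?_, ?_⟩
    · exact Finsupp.single_mem_supported ℤ 1 (mem_etrails_two G hab hbc hac.ne)
    · rw [LinearMap.mem_ker, bdry_single, bdryElt_three, if_neg]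
      rw [mlen_cons_cons, mlen_singleton, add_zero, SimpleGraph.edist_eq_one_iff_adj.mpr hac]
      intro hcon
      exact absurd (by exact_mod_cast hcon : (1 : ℕ) = 2) (by decide)
  rw [hE, Submodule.mem_bot] at hmem
  exact one_ne_zero (Finsupp.single_eq_zero.1 hmem)

lemma no_square (hE : EMHkk G 2 = ⊥) :
    ∀ p q y y' : V, G.edist p q = 2 → G.Adj p y → G.Adj y q →
      G.Adj p y' → G.Adj y' q → y = y' := by
  intro p q y y' hpq hpy hyq hpy' hy'q
  by_contra hne
  have hpq_ne : p ≠ q := by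
    intro h
    rw [h, SimpleGraph.edist_self] at hpq
    exact absurd hpq (by decide)
  have hmem : Finsupp.single [p, y, q] (1 : ℤ) - Finsupp.single [p, y', q] (1 : ℤ)
      ∈ EMHkk G 2 := by
    refine Submodule.mem_inf.2 ⟨?_, ?_⟩
    · exact Submodule.sub_mem _
        (Finsupp.single_mem_supported ℤ 1 (mem_etrails_two G hpy hyq hpq_ne))
        (Finsupp.single_mem_supported ℤ 1 (mem_etrails_two G hpy' hy'q hpq_ne))
    · rw [LinearMap.mem_ker, map_sub, bdry_single, bdry_single, bdryElt_three, bdryElt_three]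
      have hm : mlen G [p, q] = ((2 : ℕ) : ℕ∞) := by
        rw [mlen_cons_cons, mlen_singleton, add_zero, hpq]
        norm_cast
      rw [if_pos hm, sub_self]
  rw [hE, Submodule.mem_bot] at hmem
  have happ : (Finsupp.single [p, y, q] (1 : ℤ)
      - Finsupp.single [p, y', q] (1 : ℤ)) [p, y, q] = 1 := by
    rw [Finsupp.sub_apply, Finsupp.single_eq_same, Finsupp.single_apply,
      if_neg (by simp [Ne.symm hne]), sub_zero]
  rw [hmem] at happ
  simp at happ

end Aux4

/-- Theorem 3.20: if `EMH_{n,n}(G) = 0` for all `2 ≤ n ≤ k` (`k ≥ 2`),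
then `MH_{k,k}(G) = ker ∂_{k,k}` is the `ℤ`-span of the `k`-trails of the form
`(x_0, x_1, x_0, x_1, …)` alternating between two distinct adjacent vertices. -/
theorem mh_generated_by_alternating_trails {V : Type*} (G : SimpleGraph V) (k : ℕ)
    (hk : 2 ≤ k) (hEMH : ∀ n, 2 ≤ n → n ≤ k → EMHkk G n = ⊥) :
    MHkk G k = Submodule.span ℤ
      {c : List V →₀ ℤ | ∃ u v : V, G.Adj u v ∧
        c = Finsupp.single
              (List.ofFn fun i : Fin (k + 1) => if i.val % 2 = 0 then u else v) 1} := by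
  classical
  have h2 := hEMH 2 le_rfl hk
  have htri := no_triangle G h2
  have hsq := no_square G h2
  set SSet : Set (List V →₀ ℤ) := {c : List V →₀ ℤ | ∃ u v : V, G.Adj u v ∧
      c = Finsupp.single
            (List.ofFn fun i : Fin (k + 1) => if i.val % 2 = 0 then u else v) 1} with hSS
  have hspan_le : Submodule.span ℤ SSet ≤ MHkk G k := by
    rw [Submodule.span_le]
    rintro c ⟨u, v, huv, rfl⟩
    rw [SetLike.mem_coe]
    refine Submodule.mem_inf.2 ⟨?_, ?_⟩
    · exact Finsupp.single_mem_supported ℤ 1 (altL_mem_trails G huv k)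
    · rw [LinearMap.mem_ker, bdry_single]
      obtain ⟨hlen, hc⟩ := (mem_trails_iff G k _).1 (altL_mem_trails G huv k)
      exact bdryElt_eq_zero_of_alt G hk hlen hc (altL_isAlt u v k)
  refine le_antisymm ?_ hspan_le
  intro c hc
  obtain ⟨hcMC, hcker⟩ := Submodule.mem_inf.1 hc
  rw [LinearMap.mem_ker] at hcker
  have hcsupp : ↑c.support ⊆ trails G k k := Finsupp.mem_supported ℤ c |>.1 hcMC
  set cA := c.filter IsAltList with hcA
  set cB := c.filter (fun l => ¬ IsAltList l) with hcB
  have hsum : cA + cB = c := Finsupp.filter_pos_add_filter_neg c IsAltList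
  have hAsupp : ∀ l ∈ cA.support, l ∈ trails G k k ∧ IsAltList l := by
    intro l hl
    by_cases hA : IsAltList l
    · refine ⟨hcsupp ?_, hA⟩
      have := Finsupp.mem_support_iff.1 hl
      rw [hcA, Finsupp.filter_apply_pos _ _ hA] at this
      exact Finsupp.mem_support_iff.2 this
    · exfalso
      have := Finsupp.mem_support_iff.1 hl
      rw [hcA, Finsupp.filter_apply_neg _ _ hA] at this
      exact this rfl
  have hBsupp : ∀ l ∈ cB.support, l ∈ trails G k k ∧ ¬ IsAltList l := by
    intro l hl
    by_cases hA : IsAltList l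
    · exfalso
      have := Finsupp.mem_support_iff.1 hl
      rw [hcB, Finsupp.filter_apply_neg _ _ (by simp [hA])] at this
      exact this rfl
    · refine ⟨hcsupp ?_, hA⟩
      have := Finsupp.mem_support_iff.1 hl
      rw [hcB, Finsupp.filter_apply_pos _ _ (by simp [hA])] at this
      exact Finsupp.mem_support_iff.2 this
  have hAspan : cA ∈ Submodule.span ℤ SSet := by
    rw [← Finsupp.sum_single cA, Finsupp.sum]
    apply Submodule.sum_mem
    intro l hl
    obtain ⟨hlt, hla⟩ := hAsupp l hl
    obtain ⟨u, v, huv, hlequ⟩ := eq_altL_of_alt G hk hlt hla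
    have hr : Finsupp.single l (cA l) = (cA l) • Finsupp.single l (1 : ℤ) := by
      rw [Finsupp.smul_single, smul_eq_mul, mul_one]
    rw [hr]
    exact Submodule.smul_mem _ _ (Submodule.subset_span ⟨u, v, huv, by rw [hlequ]⟩)
  have hAker : bdry G k cA = 0 := by
    have := hspan_le hAspan
    exact LinearMap.mem_ker.1 (Submodule.mem_inf.1 this).2
  have hBker : bdry G k cB = 0 := by
    have hB : cB = c - cA := by rw [← hsum, add_sub_cancel_left]
    rw [hB, map_sub, hcker, hAker, sub_zero]
  have hB0 : cB = 0 := indep G hk htri hsq cB hBsupp hBker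
  rw [← hsum, hB0, add_zero]
  exact hAspan
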